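/- Let l ≥ 1, let n₁, …, n_l be positive integers and a₁, …, a_l integers, and set L(m) := ∏_{i=1}^{l} (1 + (−1)^{n_i} a_i^m) for m ≥ 1. The sequence (L(m))_{m≥1} is unbounded if and only if all three of the following hold: (i) a_i ≠ 1 for every i with n_i odd; (ii) |a_j| > 1 for some j; and (iii) it is not the case that both some i has n_i even and a_i = −1 and some k has n_k odd and a_k = −1. -/

import Mathlib

open Finset

/-- If `|ai| ≥ 2`, the factor `1 + (-1)^ni * ai^m` has absolute value at least `|ai|^m - 1`. -/
lemma factor_abs_ge_big (ni m : ℕ) (ai : ℤ) :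
    |ai| ^ m - 1 ≤ |1 + (-1) ^ ni * ai ^ m| := by
  have key : |ai| ^ m = |(1 + (-1) ^ ni * ai ^ m) + (-1)| := by
    rw [show (1 + (-1:ℤ) ^ ni * ai ^ m) + (-1) = (-1)^ni * ai ^ m by ring,
        abs_mul, abs_pow, abs_pow, abs_neg, abs_one, one_pow, one_mul]
  have h2 := abs_add_le (1 + (-1) ^ ni * ai ^ m) (-1 : ℤ)
  rw [← key] at h2
  have : |(-1 : ℤ)| = 1 := by norm_num
  linarith [h2, this.le]

/-- Each factor is a nonzero integer (hence of absolute value ≥ 1) under the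
parity-compatibility assumptions. -/
lemma factor_abs_ge_one (ni m : ℕ) (ai : ℤ) (hm : 1 ≤ m)
    (h1 : Odd ni → ai ≠ 1)
    (hpar : ai = -1 → (Odd ni ↔ Odd m)) :
    1 ≤ |1 + (-1) ^ ni * ai ^ m| := by
  rcases eq_or_ne ai 0 with h | h0
  · simp [h, zero_pow (by omega : m ≠ 0)]
  rcases eq_or_ne ai 1 with h | hone
  · have he : Even ni := Nat.not_odd_iff_even.symm.2 (fun ho => h1 ho h)
    simp [h, he.neg_one_pow]
  rcases eq_or_ne ai (-1) with h | hneg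
  · have hiff := hpar h
    rcases Nat.even_or_odd ni with he | ho
    · have hme : Even m := Nat.not_odd_iff_even.symm.2
        (fun hmo => (Nat.not_odd_iff_even.symm.1 he) (hiff.2 hmo))
      simp [h, he.neg_one_pow, hme.neg_one_pow]
    · have hmo : Odd m := hiff.1 ho
      simp [h, ho.neg_one_pow, hmo.neg_one_pow]
  · have h2 : 2 ≤ |ai| := by
      rcases abs_cases ai with ⟨hh, _⟩ | ⟨hh, _⟩ <;> omega
    have h2m : (2:ℤ) ^ m ≤ |ai| ^ m := pow_le_pow_left₀ (by norm_num) h2 m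
    have h2m' : (2:ℤ) ≤ 2 ^ m := by
      calc (2:ℤ) = 2 ^ 1 := (pow_one 2).symm
        _ ≤ 2 ^ m := pow_le_pow_right₀ (by norm_num) hm
    have := factor_abs_ge_big ni m ai
    linarith

/-- The sequence of Lefschetz numbers `L(m) = ∏ᵢ (1 + (-1)^{nᵢ} aᵢᵐ)`, `m ≥ 1`, is
unbounded if and only if: (i) `aᵢ ≠ 1` whenever `nᵢ` is odd; (ii) some `|aⱼ| > 1`; and
(iii) it is not the case that both some even-dimensional eigenvalue equals `-1` and some
odd-dimensional eigenvalue equals `-1`. -/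
theorem lefschetz_numbers_unbounded_iff
    (l : ℕ) (hl : 1 ≤ l) (n : Fin l → ℕ) (hn : ∀ i, 0 < n i) (a : Fin l → ℤ) :
    (¬ ∃ B : ℤ, ∀ m : ℕ, 1 ≤ m → |∏ i, (1 + (-1) ^ n i * a i ^ m)| ≤ B) ↔
      ((∀ i, Odd (n i) → a i ≠ 1) ∧ (∃ j, 1 < |a j|) ∧
        ¬ ((∃ i, Even (n i) ∧ a i = -1) ∧ (∃ k, Odd (n k) ∧ a k = -1))) := by
  constructor
  · intro hub
    refine ⟨?_, ?_, ?_⟩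
    · -- if some odd-dimensional eigenvalue is 1, the product is identically 0
      intro i hi hai
      apply hub
      refine ⟨0, fun m hm => ?_⟩
      rw [Finset.prod_eq_zero (Finset.mem_univ i)]
      · simp
      · rw [hai, one_pow, mul_one, hi.neg_one_pow]; ring
    · -- if all |a i| ≤ 1, the product is bounded by 2^l
      by_contra h
      push_neg at h
      apply hub
      refine ⟨2 ^ l, fun m hm => ?_⟩
      rw [Finset.abs_prod]
      calc ∏ i, |1 + (-1) ^ n i * a i ^ m| ≤ ∏ _i : Fin l, (2:ℤ) := by
            apply Finset.prod_le_prod (fun i _ => abs_nonneg _)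
            intro i _
            calc |1 + (-1) ^ n i * a i ^ m| ≤ |(1:ℤ)| + |(-1:ℤ) ^ n i * a i ^ m| :=
                  abs_add_le _ _
              _ ≤ 1 + 1 := by
                  rw [abs_mul, abs_pow, abs_pow, abs_neg, abs_one, one_pow, one_mul]
                  have : |a i| ^ m ≤ 1 := pow_le_one₀ (abs_nonneg _) (h i)
                  linarith
              _ = 2 := by norm_num
        _ = 2 ^ l := by simp
    · -- if both an even-dim and an odd-dim eigenvalue equal -1, product is always 0
      rintro ⟨⟨i, hi, hai⟩, ⟨k, hk, hak⟩⟩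
      apply hub
      refine ⟨0, fun m hm => ?_⟩
      rcases Nat.even_or_odd m with hme | hmo
      · rw [Finset.prod_eq_zero (Finset.mem_univ k)]
        · simp
        · rw [hak, hk.neg_one_pow, hme.neg_one_pow]; ring
      · rw [Finset.prod_eq_zero (Finset.mem_univ i)]
        · simp
        · rw [hai, hi.neg_one_pow, hmo.neg_one_pow]; ring
  · rintro ⟨h1, ⟨j, hj⟩, h3⟩ ⟨B, hB⟩
    -- choose a parity p compatible with all eigenvalues equal to -1
    obtain ⟨p, hp⟩ : ∃ p : ℕ, ∀ i, a i = -1 → (Odd (n i) ↔ Odd p) := by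
      by_cases hodd : ∃ k, Odd (n k) ∧ a k = -1
      · refine ⟨1, fun i hi => ⟨fun _ => odd_one, fun _ => ?_⟩⟩
        by_contra hno
        exact h3 ⟨⟨i, Nat.not_odd_iff_even.symm.2 hno, hi⟩, hodd⟩
      · push_neg at hodd
        exact ⟨0, fun i hi => ⟨fun ho => absurd hi (hodd i ho), fun h => absurd h (by decide)⟩⟩
    set M : ℕ := B.toNat + 2 with hM
    set m : ℕ := 2 * M + p % 2 with hmdef
    have hm1 : 1 ≤ m := by omega
    have hmp : Odd m ↔ Odd p := by
      simp only [Nat.odd_iff]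
      omega
    -- every factor has absolute value ≥ 1
    have hfac : ∀ i, 1 ≤ |1 + (-1) ^ n i * a i ^ m| := fun i =>
      factor_abs_ge_one (n i) m (a i) hm1 (h1 i) (fun h => (hp i h).trans hmp.symm)
    -- the j-th factor is large
    have hj2 : 2 ≤ |a j| := by omega
    have hbig : (2:ℤ) ^ m - 1 ≤ |1 + (-1) ^ n j * a j ^ m| := by
      have h2m : (2:ℤ) ^ m ≤ |a j| ^ m := pow_le_pow_left₀ (by norm_num) hj2 m
      have := factor_abs_ge_big (n j) m (a j)
      linarith
    have hP : (2:ℤ) ^ m - 1 ≤ |∏ i, (1 + (-1) ^ n i * a i ^ m)| := by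
      rw [Finset.abs_prod]
      calc (2:ℤ) ^ m - 1 ≤ |1 + (-1) ^ n j * a j ^ m| := hbig
        _ = ∏ i, (if i = j then |1 + (-1) ^ n j * a j ^ m| else 1) := by
            rw [Finset.prod_ite_eq' Finset.univ j
              (fun _ => |1 + (-1) ^ n j * a j ^ m|)]
            simp
        _ ≤ ∏ i, |1 + (-1) ^ n i * a i ^ m| := by
            apply Finset.prod_le_prod
            · intro i _
              split <;> positivity
            · intro i _
              split
              · next h => rw [h]
              · exact hfac i
    have hBm := hB m hm1
    -- but 2^m - 1 > B, contradiction
    have hnat : B.toNat + 3 ≤ 2 ^ m := by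
      have hlt := Nat.lt_two_pow_self (n := m)
      omega
    have hcast : (B.toNat : ℤ) + 3 ≤ (2:ℤ) ^ m := by exact_mod_cast hnat
    have hBle : B ≤ (B.toNat : ℤ) := Int.self_le_toNat B
    linarith
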